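/- arXiv:1204.4873 — 2 statements merged into one kernel-verified Lean document; each statement's English description precedes it below -/
import Mathlib

section
/- Let H and A be finitely generated abelian groups, ν : H → A a surjective homomorphism, ξ ≤ H a subgroup, and η ∈ Ĥ a character. Then the set {ρ ∈ Ĥ : ρ(x) = 1 for all x ∈ ker ν, and (η⁻¹ρ)(y) = 1 for all y ∈ ξ} (that is, im(ν̂) ∩ ηV(ξ)) is infinite if and only if rank(ker ν + ξ) < rank H and η(z) = 1 for all z ∈ ker ν ∩ ξ. In particular, taking η = 1: im(ν̂) ∩ V(ξ) is infinite if and only if rank(ker ν + ξ) < rank H. -/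
open scoped TensorProduct Pointwise

/-- The set of surjective homomorphisms between two additive groups. -/
def EpiSet (G A : Type*) [AddGroup G] [AddGroup A] : Type _ :=
  {f : G →+ A // Function.Surjective f}

/-- Two epimorphisms are equivalent if they differ by an automorphism of the target. -/
def GammaRel (G A : Type*) [AddGroup G] [AddGroup A] (ν₁ ν₂ : EpiSet G A) : Prop :=
  ∃ α : A ≃+ A, ∀ g : G, α (ν₁.1 g) = ν₂.1 g

/-- The parameter set `Γ(G,A) = Epi(G,A)/Aut(A)`. -/
def GammaSet (G A : Type*) [AddGroup G] [AddGroup A] : Type _ :=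
  Quot (GammaRel G A)

/-- The character group of an (additively written) abelian group. -/
abbrev CharGp (H : Type*) [AddCommGroup H] : Type _ := Multiplicative H →* ℂˣ

/-- `V(ξ)`, the set of characters vanishing (i.e. taking value 1) on a subgroup `ξ`. -/
def charV {H : Type*} [AddCommGroup H] (ξ : AddSubgroup H) : Set (CharGp H) :=
  {ρ | ∀ x ∈ ξ, ρ (Multiplicative.ofAdd x) = 1}

/-- The primitive closure of a subgroup of an abelian group. -/
def pclose {H : Type*} [AddCommGroup H] (ξ : AddSubgroup H) : AddSubgroup H where
  carrier := {x | ∃ m : ℕ, 0 < m ∧ m • x ∈ ξ}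
  zero_mem' := ⟨1, Nat.one_pos, by simpa using ξ.zero_mem⟩
  add_mem' := by
    rintro a b ⟨m, hm, ha⟩ ⟨k, hk, hb⟩
    refine ⟨m * k, Nat.mul_pos hm hk, ?_⟩
    rw [smul_add]
    exact ξ.add_mem (by rw [mul_comm, mul_smul]; exact ξ.nsmul_mem ha k)
      (by rw [mul_smul]; exact ξ.nsmul_mem hb m)
  neg_mem' := by
    rintro a ⟨m, hm, ha⟩
    exact ⟨m, hm, by rw [smul_neg]; exact ξ.neg_mem ha⟩

/-- A subgroup is primitive if it equals its primitive closure. -/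
def IsPrimitiveSub {H : Type*} [AddCommGroup H] (ξ : AddSubgroup H) : Prop :=
  pclose ξ = ξ

/-- The determinant group `ξ̄/ξ` of a subgroup. -/
def detGroup {H : Type*} [AddCommGroup H] (ξ : AddSubgroup H) : Type _ :=
  ↥(pclose ξ) ⧸ ξ.addSubgroupOf (pclose ξ)

noncomputable instance {H : Type*} [AddCommGroup H] (ξ : AddSubgroup H) :
    AddCommGroup (detGroup ξ) := by unfold detGroup; infer_instance

/-- The rank of a f.g. abelian group, `dim_ℚ (B ⊗ ℚ)`. -/
noncomputable def rkOf (B : Type*) [AddCommGroup B] : ℕ :=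
  Module.finrank ℚ (ℚ ⊗[ℤ] B)

/-- The largest order of an element of `K`. -/
noncomputable def maxOrder (K : Type*) [AddGroup K] : ℕ :=
  sSup (Set.range fun g : K => addOrderOf g)

/-- The translate `η·V(ξ)` of the "subtorus" `V(ξ)` by the character `η`. -/
def transTorus {H : Type*} [AddCommGroup H] (η : CharGp H) (ξ : AddSubgroup H) :
    Set (CharGp H) :=
  (η * ·) '' charV ξ

/-- `S` is a maximal positive-dimensional torsion-translated subtorus inside `W`. -/
def MaxTransTorusIn {H : Type*} [AddCommGroup H] (S W : Set (CharGp H)) : Prop :=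
  S.Infinite ∧ S ⊆ W ∧
    ∀ (χ : AddSubgroup H) (η' : CharGp H), IsPrimitiveSub χ → IsOfFinOrder η' →
      S ⊆ transTorus η' χ → transTorus η' χ ⊆ W → transTorus η' χ = S

/-- The collection `Ξ_d(W)` of subgroups of `H` attached to a subvariety `W` of the
character group. -/
def Xi {H : Type*} [AddCommGroup H] (d : ℕ) (W : Set (CharGp H)) : Set (AddSubgroup H) :=
  {ξ | IsAddCyclic (detGroup ξ) ∧ Nat.card (detGroup ξ) ∣ d ∧
    ∃ η : CharGp H, IsOfFinOrder η ∧ orderOf η = Nat.card (detGroup ξ) ∧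
      (∀ x ∈ ξ, η (Multiplicative.ofAdd x) = 1) ∧
      {x : H | x ∈ pclose ξ ∧ η (Multiplicative.ofAdd x) = 1} = (ξ : Set H) ∧
      MaxTransTorusIn (transTorus η (pclose ξ)) W}

/-- Evaluation of an element of the group algebra `ℂ[H]` at a character, i.e. the
`ℂ`-algebra homomorphism `ℂ[H] → ℂ` extending the character. -/
noncomputable def evalAt {H : Type*} [AddCommGroup H] (ρ : CharGp H) :
    AddMonoidAlgebra ℂ H →ₐ[ℂ] ℂ :=
  AddMonoidAlgebra.lift ℂ ℂ H ((Units.coeHom ℂ).comp ρ)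

/-- `W` is a Zariski closed subset of the character group. -/
def IsZarClosed {H : Type*} [AddCommGroup H] (W : Set (CharGp H)) : Prop :=
  ∃ S : Set (AddMonoidAlgebra ℂ H), W = {ρ | ∀ f ∈ S, evalAt ρ f = 0}

/-- The support of a module: the set of maximal ideals at which the localization is
nonzero. -/
def suppMax (S M : Type*) [CommRing S] [AddCommGroup M] [Module S M] :
    Set (MaximalSpectrum S) :=
  {m | haveI := m.isMaximal.isPrime; Nontrivial (LocalizedModule m.asIdeal.primeCompl M)}

/-! ### Auxiliary material for `statement13` -/

section Aux

open Multiplicative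

noncomputable instance : RootableBy ℂˣ ℕ :=
  rootableByOfPowLeftSurj _ _ fun {n} hn z => by
    obtain ⟨w, hw⟩ := IsAlgClosed.exists_pow_nat_eq (z : ℂ) (Nat.pos_of_ne_zero hn)
    have hw0 : w ≠ 0 := by
      intro h
      rw [h, zero_pow hn] at hw
      exact z.ne_zero hw.symm
    exact ⟨Units.mk0 w hw0, Units.ext (by simpa using hw)⟩

noncomputable instance : RootableBy ℂˣ ℤ := Group.rootableByIntOfRootableByNat ℂˣ

noncomputable instance : DivisibleBy (Additive ℂˣ) ℤ :=
  divisibleByOfSMulRightSurj _ _ fun {n} hn a => by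
    refine ⟨Additive.ofMul (RootableBy.root (Additive.toMul a) n), ?_⟩
    have := RootableBy.root_cancel (α := ℤ) (Additive.toMul a) hn
    apply Additive.toMul.injective
    simpa using this

instance : Infinite ℂˣ :=
  Infinite.of_injective (fun q : ℕ => Units.mk0 ((q : ℂ) + 1) (Nat.cast_add_one_ne_zero q))
    (fun a b h => by
      have := congrArg Units.val h
      simp only [Units.val_mk0] at this
      exact_mod_cast add_right_cancel this)

/-- Every additive hom from a subgroup to `Additive ℂˣ` extends to the whole group. -/
theorem exists_addHom_extension {H : Type u} [AddCommGroup H] (N : AddSubgroup H)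
    (f : ↥N →+ Additive ℂˣ) : ∃ g : H →+ Additive ℂˣ, ∀ n : N, g ↑n = f n := by
  have baer : Module.Baer ℤ (Additive ℂˣ) := Module.Baer.of_divisible _
  have inj0 : Module.Injective ℤ (Additive ℂˣ) := baer.injective
  have inj : Module.Injective ℤ (ULift.{u} (Additive ℂˣ)) :=
    Module.ulift_injective_of_injective (R := ℤ) inj0
  obtain ⟨h, hh⟩ := inj.out (N.subtype.toIntLinearMap) Subtype.coe_injective
    ((ULift.moduleEquiv.symm.toLinearMap : Additive ℂˣ →ₗ[ℤ] ULift.{u} (Additive ℂˣ)) ∘ₗ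
      f.toIntLinearMap)
  refine ⟨((ULift.moduleEquiv.toLinearMap : ULift.{u} (Additive ℂˣ) →ₗ[ℤ] Additive ℂˣ) ∘ₗ
    h).toAddMonoidHom, fun n => ?_⟩
  have := hh n
  simp only [LinearMap.coe_comp, Function.comp_apply] at this ⊢
  rw [show (N.subtype.toIntLinearMap n : H) = (n : H) from rfl] at this
  simp [this]

/-- Build a character from an additive hom to `Additive ℂˣ`. -/
def mkChar {H : Type*} [AddCommGroup H] (g : H →+ Additive ℂˣ) : CharGp H :=
  AddMonoidHom.toMultiplicativeLeft g

@[simp] lemma mkChar_apply {H : Type*} [AddCommGroup H] (g : H →+ Additive ℂˣ) (h : H) :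
    mkChar g (Multiplicative.ofAdd h) = Additive.toMul (g h) := rfl

/-- The character group of a finite abelian group is finite. -/
lemma charGp_finite (B : Type*) [AddCommGroup B] [Finite B] : Finite (CharGp B) := by
  set n := Nat.card B with hn
  haveI : NeZero n := ⟨Nat.card_pos.ne'⟩
  have key : ∀ (ρ : CharGp B) (b : B), ρ (Multiplicative.ofAdd b) ∈ rootsOfUnity n ℂ := by
    intro ρ b
    rw [mem_rootsOfUnity]
    rw [← map_pow, ← ofAdd_nsmul]
    rw [card_nsmul_eq_zero']
    simp
  have : Function.Injective
      (fun ρ : CharGp B => fun b : B => (⟨_, key ρ b⟩ : ↥(rootsOfUnity n ℂ))) := by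
    intro ρ σ h
    have key2 : ∀ b : B, ρ (Multiplicative.ofAdd b) = σ (Multiplicative.ofAdd b) := fun b => by
      simpa [Subtype.ext_iff] using congrFun h b
    ext m
    have := key2 (Multiplicative.toAdd m)
    exact congrArg Units.val this
  exact Finite.of_injective _ this

/-- A f.g. infinite abelian group admits a hom onto `ℤ`. -/
lemma exists_hom_int (B : Type*) [AddCommGroup B] [AddGroup.FG B] (hB : Infinite B) :
    ∃ (φ : B →+ ℤ) (b : B), φ b = 1 := by
  obtain ⟨n, ι, fι, p, hp, e, ⟨f⟩⟩ := AddCommGroup.equiv_free_prod_directSum_zmod B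
  haveI : ∀ i, NeZero (p i ^ e i) := fun i => ⟨pow_ne_zero _ (hp i).pos.ne'⟩
  rcases Nat.eq_zero_or_pos n with hn | hn
  · subst hn
    haveI : Subsingleton (Fin 0 →₀ ℤ) :=
      ⟨fun a b => Finsupp.ext fun j => j.elim0⟩
    haveI : Finite (DirectSum ι fun i => ZMod (p i ^ e i)) :=
      Finite.of_equiv _ (DFinsupp.equivFunOnFintype (ι := ι)).symm
    haveI : Finite B := Finite.of_equiv _ f.symm.toEquiv
    exact absurd ‹Finite B› hB.not_finite
  · refine ⟨(Finsupp.applyAddHom (⟨0, hn⟩ : Fin n)).comp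
      ((AddMonoidHom.fst _ _).comp f.toAddMonoidHom),
      f.symm (Finsupp.single ⟨0, hn⟩ 1, 0), ?_⟩
    simp

instance : Module.Flat ℤ ℚ := IsLocalization.flat ℚ (nonZeroDivisors ℤ)

lemma rkOf_eq_zero_of_finite (B : Type*) [AddCommGroup B] [Finite B] : rkOf B = 0 := by
  have hsub : Subsingleton (ℚ ⊗[ℤ] B) := by
    set n := Nat.card B with hn
    have hn0 : (n : ℚ) ≠ 0 := Nat.cast_ne_zero.mpr Nat.card_pos.ne'
    refine subsingleton_of_forall_eq 0 fun x => ?_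
    induction x using TensorProduct.induction_on with
    | zero => rfl
    | tmul q b =>
      have h1 : q = (n : ℤ) • ((n : ℚ)⁻¹ * q) := by
        rw [zsmul_eq_mul]
        push_cast
        field_simp
      rw [h1, TensorProduct.smul_tmul]
      have : (n : ℤ) • b = 0 := by
        rw [show ((n : ℤ) • b) = n • b from natCast_zsmul b n, card_nsmul_eq_zero']
      rw [this, TensorProduct.tmul_zero]
    | add x y hx hy => rw [hx, hy, add_zero]
  unfold rkOf
  exact Module.finrank_zero_of_subsingleton

lemma rkOf_pos_of_infinite (B : Type*) [AddCommGroup B] [AddGroup.FG B] (hB : Infinite B) :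
    0 < rkOf B := by
  haveI : Module.Finite ℤ B := Module.Finite.iff_addGroup_fg.mpr ‹_›
  obtain ⟨φ, b, hb⟩ := exists_hom_int B hB
  -- the induced map `ℚ ⊗ B → ℚ` sending `q ⊗ b` to `φ b • q`
  let ψ : ℚ ⊗[ℤ] B →ₗ[ℤ] ℚ := TensorProduct.lift
    (LinearMap.mk₂ ℤ (fun q b => (φ b : ℚ) * q)
      (fun q q' b => by ring)
      (fun m q b => by simp [zsmul_eq_mul]; ring)
      (fun q b b' => by simp [map_add]; push_cast; ring)
      (fun m q b => by simp [map_zsmul]; push_cast; ring))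
  have hψ : ψ ((1 : ℚ) ⊗ₜ[ℤ] b) = 1 := (TensorProduct.lift.tmul _ _).trans (by simp [hb])
  have hne : ((1 : ℚ) ⊗ₜ[ℤ] b : ℚ ⊗[ℤ] B) ≠ 0 := by
    intro h
    rw [h, map_zero] at hψ
    exact one_ne_zero hψ.symm
  haveI : Nontrivial (ℚ ⊗[ℤ] B) := nontrivial_of_ne _ 0 hne
  unfold rkOf
  exact Module.finrank_pos

/-- Rank additivity for a subgroup and its quotient. -/
lemma rkOf_add_rkOf_quotient {H : Type*} [AddCommGroup H] [AddGroup.FG H] (N : AddSubgroup H) :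
    rkOf ↥N + rkOf (H ⧸ N) = rkOf H := by
  haveI : Module.Finite ℤ H := Module.Finite.iff_addGroup_fg.mpr ‹_›
  haveI : IsNoetherian ℤ H := isNoetherian_of_isNoetherianRing_of_finite ℤ H
  haveI : Module.Finite ℤ ↥N := by
    have h := IsNoetherian.noetherian (AddSubgroup.toIntSubmodule N)
    exact Module.Finite.iff_fg.mpr h
  haveI : AddGroup.FG (H ⧸ N) :=
    AddGroup.fg_of_surjective (f := QuotientAddGroup.mk' N) (QuotientAddGroup.mk'_surjective N)
  haveI : Module.Finite ℤ (H ⧸ N) := Module.Finite.iff_addGroup_fg.mpr ‹_›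
  let i : ↥N →ₗ[ℤ] H := N.subtype.toIntLinearMap
  let π : H →ₗ[ℤ] H ⧸ N := (QuotientAddGroup.mk' N).toIntLinearMap
  have hexact : Function.Exact i π := by
    intro h
    constructor
    · intro hh
      have : h ∈ N := (QuotientAddGroup.eq_zero_iff h).mp hh
      exact ⟨⟨h, this⟩, rfl⟩
    · rintro ⟨⟨n, hn⟩, rfl⟩
      exact (QuotientAddGroup.eq_zero_iff _).mpr hn
  have hinj : Function.Injective (i.baseChange ℚ) := by
    rw [LinearMap.baseChange_eq_ltensor]
    exact Module.Flat.lTensor_preserves_injective_linearMap i Subtype.coe_injective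
  have hsurj : Function.Surjective (π.baseChange ℚ) := by
    rw [LinearMap.baseChange_eq_ltensor]
    exact LinearMap.lTensor_surjective ℚ (QuotientAddGroup.mk'_surjective N)
  have hex2 : Function.Exact (i.baseChange ℚ) (π.baseChange ℚ) := by
    have := Module.Flat.lTensor_exact (R := ℤ) ℚ hexact
    rwa [← LinearMap.baseChange_eq_ltensor (A := ℚ) (f := i),
      ← LinearMap.baseChange_eq_ltensor (A := ℚ) (f := π)] at this
  have hrn := LinearMap.finrank_range_add_finrank_ker (π.baseChange ℚ)
  have h1 : Module.finrank ℚ (LinearMap.range (π.baseChange ℚ)) = rkOf (H ⧸ N) := by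
    rw [LinearMap.range_eq_top.mpr hsurj]
    exact finrank_top ℚ _
  have h2 : Module.finrank ℚ (LinearMap.ker (π.baseChange ℚ)) = rkOf ↥N := by
    rw [LinearMap.exact_iff.mp hex2]
    exact LinearMap.finrank_range_of_inj hinj
  rw [h1, h2] at hrn
  unfold rkOf at hrn ⊢
  omega

end Aux

/-- `im(ν̂) ∩ ηV(ξ)` is infinite if and only if `rank(ker ν + ξ) < rank H` and `η`
takes the value `1` on `ker ν ∩ ξ`. -/
theorem statement13 {H A : Type*} [AddCommGroup H] [AddGroup.FG H]
    [AddCommGroup A] [AddGroup.FG A]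
    (ν : H →+ A) (hν : Function.Surjective ν)
    (ξ : AddSubgroup H) (η : CharGp H) :
    {ρ : CharGp H | (∀ x ∈ ν.ker, ρ (Multiplicative.ofAdd x) = 1) ∧
        ∀ y ∈ ξ, (η⁻¹ * ρ) (Multiplicative.ofAdd y) = 1}.Infinite ↔
      rkOf ↥(ν.ker ⊔ ξ) < rkOf H ∧ ∀ z ∈ ν.ker ⊓ ξ, η (Multiplicative.ofAdd z) = 1 := by
  classical
  set N : AddSubgroup H := ν.ker ⊔ ξ with hN
  have hKN : ν.ker ≤ N := le_sup_left
  have hξN : ξ ≤ N := le_sup_right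
  haveI fgQ : AddGroup.FG (H ⧸ N) :=
    AddGroup.fg_of_surjective (f := QuotientAddGroup.mk' N) (QuotientAddGroup.mk'_surjective N)
  have hadd := rkOf_add_rkOf_quotient N
  constructor
  · intro hS
    obtain ⟨ρ₀, hρ₀1, hρ₀2⟩ := hS.nonempty
    have hρ₀ξ : ∀ y ∈ ξ, ρ₀ (Multiplicative.ofAdd y) = η (Multiplicative.ofAdd y) := by
      intro y hy
      have := hρ₀2 y hy
      rwa [MonoidHom.mul_apply, MonoidHom.inv_apply, inv_mul_eq_one, eq_comm] at this
    have hη : ∀ z ∈ ν.ker ⊓ ξ, η (Multiplicative.ofAdd z) = 1 := by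
      intro z hz
      rw [← hρ₀ξ z hz.2]
      exact hρ₀1 z hz.1
    refine ⟨?_, hη⟩
    by_contra hrk
    push_neg at hrk
    have h0 : rkOf (H ⧸ N) = 0 := by omega
    haveI : Finite (H ⧸ N) := by
      by_contra hf
      rw [not_finite_iff_infinite] at hf
      exact absurd h0 (rkOf_pos_of_infinite _ hf).ne'
    haveI := charGp_finite (H ⧸ N)
    set S := {ρ : CharGp H | (∀ x ∈ ν.ker, ρ (Multiplicative.ofAdd x) = 1) ∧
        ∀ y ∈ ξ, (η⁻¹ * ρ) (Multiplicative.ofAdd y) = 1} with hSdef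
    -- each element of `S` differs from `ρ₀` by a character trivial on `N`
    have trivχ : ∀ ρ : ↥S, ∀ n ∈ N, (ρ₀⁻¹ * (ρ : CharGp H)) (Multiplicative.ofAdd n) = 1 := by
      rintro ⟨ρ, hρ1, hρ2⟩ n hn
      have hρξ : ∀ y ∈ ξ, ρ (Multiplicative.ofAdd y) = η (Multiplicative.ofAdd y) := by
        intro y hy
        have := hρ2 y hy
        rwa [MonoidHom.mul_apply, MonoidHom.inv_apply, inv_mul_eq_one, eq_comm] at this
      rw [hN, AddSubgroup.mem_sup] at hn
      obtain ⟨k, hk, x, hx, rfl⟩ := hn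
      rw [MonoidHom.mul_apply, MonoidHom.inv_apply, inv_mul_eq_one]
      rw [ofAdd_add, map_mul, map_mul, hρ₀1 k hk, hρ1 k hk, hρ₀ξ x hx, hρξ x hx]
    have hker : ∀ ρ : ↥S, N ≤ (MonoidHom.toAdditiveRight (ρ₀⁻¹ * (ρ : CharGp H))).ker := by
      intro ρ n hn
      rw [AddMonoidHom.mem_ker]
      show Additive.ofMul ((ρ₀⁻¹ * (ρ : CharGp H)) (Multiplicative.ofAdd n)) = 0
      rw [trivχ ρ n hn]
      rfl
    set Φ : ↥S → CharGp (H ⧸ N) := fun ρ =>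
      mkChar (QuotientAddGroup.lift N (MonoidHom.toAdditiveRight (ρ₀⁻¹ * (ρ : CharGp H)))
        (hker ρ)) with hΦdef
    have hΦapp : ∀ (ρ : ↥S) (x : H),
        Φ ρ (Multiplicative.ofAdd ((x : H ⧸ N))) =
          (ρ₀⁻¹ * (ρ : CharGp H)) (Multiplicative.ofAdd x) := by
      intro ρ x
      show Additive.toMul (QuotientAddGroup.lift N
        (MonoidHom.toAdditiveRight (ρ₀⁻¹ * (ρ : CharGp H))) (hker ρ) ((x : H ⧸ N))) = _
      rw [QuotientAddGroup.lift_mk]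
      rfl
    have hΦ : Function.Injective Φ := by
      intro ρ σ h
      have hpt : ∀ x : H, (ρ : CharGp H) (Multiplicative.ofAdd x) =
          (σ : CharGp H) (Multiplicative.ofAdd x) := by
        intro x
        have := congrArg (fun c : CharGp (H ⧸ N) =>
          c (Multiplicative.ofAdd ((x : H ⧸ N)))) h
        simp only [hΦapp] at this
        rw [MonoidHom.mul_apply, MonoidHom.mul_apply] at this
        exact mul_left_cancel this
      apply Subtype.ext
      ext m
      have := hpt (Multiplicative.toAdd m)
      exact congrArg Units.val this
    have hSfin : S.Finite := Set.finite_coe_iff.mp (Finite.of_injective Φ hΦ)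
    exact hS hSfin
  · rintro ⟨hrk, hη⟩
    have decomp : ∀ n : H, n ∈ N → ∃ k x, k ∈ ν.ker ∧ x ∈ ξ ∧ k + x = n := by
      intro n hn
      rw [hN, AddSubgroup.mem_sup] at hn
      obtain ⟨k, hk, x, hx, hkx⟩ := hn
      exact ⟨k, x, hk, hx, hkx⟩
    choose kk xx hkk hxx hsum using decomp
    have val_eq : ∀ (n : H) (hn : n ∈ N) (x' : H), x' ∈ ξ → n - x' ∈ ν.ker →
        η (Multiplicative.ofAdd (xx n hn)) = η (Multiplicative.ofAdd x') := by
      intro n hn x' hx' hk'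
      have hmem : xx n hn - x' ∈ ν.ker ⊓ ξ := by
        refine AddSubgroup.mem_inf.mpr ⟨?_, ξ.sub_mem (hxx n hn) hx'⟩
        have hx2 : xx n hn - x' = (n - x') - kk n hn := by
          have h := hsum n hn
          calc xx n hn - x' = (kk n hn + xx n hn - x') - kk n hn := by abel
            _ = (n - x') - kk n hn := by rw [h]
        rw [hx2]
        exact (ν.ker).sub_mem hk' (hkk n hn)
      have h1 := hη _ hmem
      rw [ofAdd_sub, map_div] at h1
      exact div_eq_one.mp h1
    let f₀ : ↥N →+ Additive ℂˣ :=
      { toFun := fun n => Additive.ofMul (η (Multiplicative.ofAdd (xx n.1 n.2)))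
        map_zero' := by
          have h0 := val_eq ((0 : ↥N) : H) (0 : ↥N).2 0 ξ.zero_mem
            (by simpa using (ν.ker).zero_mem)
          simp only [ofAdd_zero, map_one] at h0
          show Additive.ofMul (η (Multiplicative.ofAdd (xx ((0 : ↥N) : H) (0 : ↥N).2))) = 0
          rw [h0]
          rfl
        map_add' := by
          intro a b
          have hx' : xx (a : H) a.2 + xx (b : H) b.2 ∈ ξ := ξ.add_mem (hxx _ _) (hxx _ _)
          have hk' : ((a : H) + (b : H)) - (xx (a : H) a.2 + xx (b : H) b.2) ∈ ν.ker := by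
            have hx2 : ((a : H) + (b : H)) - (xx (a : H) a.2 + xx (b : H) b.2) =
                kk (a : H) a.2 + kk (b : H) b.2 := by
              have ha := hsum (a : H) a.2
              have hb := hsum (b : H) b.2
              calc ((a : H) + (b : H)) - (xx (a : H) a.2 + xx (b : H) b.2)
                  = ((kk (a : H) a.2 + xx (a : H) a.2) + (kk (b : H) b.2 + xx (b : H) b.2))
                    - (xx (a : H) a.2 + xx (b : H) b.2) := by rw [ha, hb]
                _ = kk (a : H) a.2 + kk (b : H) b.2 := by abel
            rw [hx2]
            exact (ν.ker).add_mem (hkk _ _) (hkk _ _)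
          have key := val_eq ((a + b : ↥N) : H) (a + b : ↥N).2 _ hx' hk'
          show Additive.ofMul (η (Multiplicative.ofAdd (xx ((a + b : ↥N) : H) (a + b : ↥N).2)))
            = _
          rw [key, ofAdd_add, map_mul]
          rfl }
    obtain ⟨g, hg⟩ := exists_addHom_extension N f₀
    set ρ₀ := mkChar g with hρ₀def
    have hρ₀N : ∀ (n : H) (hn : n ∈ N),
        ρ₀ (Multiplicative.ofAdd n) = η (Multiplicative.ofAdd (xx n hn)) := by
      intro n hn
      rw [hρ₀def, mkChar_apply, show g n = f₀ ⟨n, hn⟩ from hg ⟨n, hn⟩]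
      rfl
    have hρ₀K : ∀ p ∈ ν.ker, ρ₀ (Multiplicative.ofAdd p) = 1 := by
      intro p hp
      rw [hρ₀N p (hKN hp)]
      have := val_eq p (hKN hp) 0 ξ.zero_mem (by simpa using hp)
      simpa using this
    have hρ₀ξ : ∀ y ∈ ξ, ρ₀ (Multiplicative.ofAdd y) = η (Multiplicative.ofAdd y) := by
      intro y hy
      rw [hρ₀N y (hξN hy)]
      exact val_eq y (hξN hy) y hy (by simpa using (ν.ker).zero_mem)
    haveI : Infinite (H ⧸ N) := by
      by_contra hfin
      rw [not_infinite_iff_finite] at hfin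
      have := rkOf_eq_zero_of_finite (H ⧸ N)
      omega
    obtain ⟨φ', b, hb⟩ := exists_hom_int (H ⧸ N) ‹_›
    obtain ⟨h₀, hh₀⟩ := QuotientAddGroup.mk'_surjective N b
    set φ : H →+ ℤ := φ'.comp (QuotientAddGroup.mk' N) with hφ
    have hφN : ∀ n ∈ N, φ n = 0 := by
      intro n hn
      rw [hφ]
      simp only [AddMonoidHom.coe_comp, Function.comp_apply, QuotientAddGroup.mk'_apply]
      rw [(QuotientAddGroup.eq_zero_iff n).mpr hn, map_zero]
    have hφh₀ : φ h₀ = 1 := by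
      rw [hφ]
      simp only [AddMonoidHom.coe_comp, Function.comp_apply]
      rw [hh₀, hb]
    set F : ℂˣ → CharGp H := fun z =>
      ρ₀ * mkChar ((zmultiplesHom (Additive ℂˣ) (Additive.ofMul z)).comp φ) with hF
    have hFapp : ∀ (z : ℂˣ) (x : H),
        F z (Multiplicative.ofAdd x) = ρ₀ (Multiplicative.ofAdd x) * z ^ (φ x) := by
      intro z x
      rw [hF]
      simp only [MonoidHom.mul_apply, mkChar_apply, AddMonoidHom.coe_comp, Function.comp_apply]
      congr 1
    refine Set.infinite_of_injective_forall_mem (f := F) ?_ ?_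
    · intro z w hzw
      have := congrArg (fun c : CharGp H => c (Multiplicative.ofAdd h₀)) hzw
      simp only [hFapp, hφh₀] at this
      simpa [zpow_one] using mul_left_cancel this
    · intro z
      refine ⟨?_, ?_⟩
      · intro x hx
        rw [hFapp, hρ₀K x hx, hφN x (hKN hx)]
        simp
      · intro y hy
        have hFy : F z (Multiplicative.ofAdd y) = η (Multiplicative.ofAdd y) := by
          rw [hFapp, hρ₀ξ y hy, hφN y (hξN hy)]
          simp
        rw [MonoidHom.mul_apply, MonoidHom.inv_apply, hFy, inv_mul_cancel]
end

section
/- Let H and A be finitely generated abelian groups, ν : H → A a surjective homomorphism, and ξ ≤ H a non-primitive subgroup (ξ ≠ ξ̄). Then the set {ρ ∈ Ĥ : ρ(x) = 1 for all x ∈ ker ν, ρ(y) = 1 for all y ∈ ξ, and ρ(z) ≠ 1 for some z ∈ ξ̄} (that is, im(ν̂) ∩ (V(ξ) ∖ V(ξ̄))) is infinite if and only if rank(ker ν + ξ) < rank H and there exists a subgroup ξ′ with ξ ≤ ξ′ ⊊ ξ̄ such that ξ̄/ξ′ is cyclic and ν(x) ≠ 0 for every x ∈ ξ̄ ∖ ξ′.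 (This is the equality Υ_A(V(ξ) ∖ V(ξ̄)) = σ_A(ξ) ∩ θ_A(ξ).) -/
open scoped TensorProduct Pointwise

/-! ### Auxiliary lemmas -/

instance inst_s14 : Module.Flat ℤ ℚ := IsLocalization.flat ℚ (nonZeroDivisors ℤ)

theorem rk_ker_add_rk {G Q : Type*} [AddCommGroup G] [AddGroup.FG G] [AddCommGroup Q]
    (f : G →+ Q) (hf : Function.Surjective f) :
    rkOf ↥f.ker + rkOf Q = rkOf G := by
  have hFG : Module.Finite ℤ G := Module.Finite.iff_addGroup_fg.mpr ‹_›
  have : Module.Finite ℚ (ℚ ⊗[ℤ] G) := inferInstance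
  set i : ↥f.ker →ₗ[ℤ] G := (f.ker.subtype).toIntLinearMap with hi_def
  set g : G →ₗ[ℤ] Q := f.toIntLinearMap with hg_def
  have hi : Function.Injective i := Subtype.val_injective
  have hexact : Function.Exact i g := by
    intro y
    constructor
    · intro hy; exact ⟨⟨y, hy⟩, rfl⟩
    · rintro ⟨⟨x, hx⟩, rfl⟩; exact hx
  have hiQ : Function.Injective (i.baseChange ℚ) := by
    rw [show ⇑(i.baseChange ℚ) = ⇑(i.lTensor ℚ) from LinearMap.baseChange_eq_ltensor i]
    exact Module.Flat.lTensor_preserves_injective_linearMap i hi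
  have hgQ : Function.Surjective (g.baseChange ℚ) := by
    rw [show ⇑(g.baseChange ℚ) = ⇑(g.lTensor ℚ) from LinearMap.baseChange_eq_ltensor g]
    exact LinearMap.lTensor_surjective ℚ hf
  have hexQ : Function.Exact (i.baseChange ℚ) (g.baseChange ℚ) := by
    rw [Function.Exact, show ⇑(i.baseChange ℚ) = ⇑(i.lTensor ℚ) from
      LinearMap.baseChange_eq_ltensor i,
      show ⇑(g.baseChange ℚ) = ⇑(g.lTensor ℚ) from LinearMap.baseChange_eq_ltensor g]
    exact lTensor_exact ℚ hexact hf
  have hker : LinearMap.ker (g.baseChange ℚ) = LinearMap.range (i.baseChange ℚ) :=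
    (LinearMap.exact_iff.mp hexQ)
  have e1 : (ℚ ⊗[ℤ] ↥f.ker) ≃ₗ[ℚ] LinearMap.range (i.baseChange ℚ) :=
    LinearEquiv.ofInjective _ hiQ
  have e2 : ((ℚ ⊗[ℤ] G) ⧸ LinearMap.ker (g.baseChange ℚ)) ≃ₗ[ℚ] (ℚ ⊗[ℤ] Q) :=
    (g.baseChange ℚ).quotKerEquivOfSurjective hgQ
  have h3 := Submodule.finrank_quotient_add_finrank (LinearMap.ker (g.baseChange ℚ))
  rw [e2.finrank_eq] at h3
  unfold rkOf
  rw [e1.finrank_eq, ← hker]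
  omega

theorem rk_le_subgroup {H : Type*} [AddCommGroup H] [AddGroup.FG H] (N : AddSubgroup H) :
    rkOf ↥N ≤ rkOf H := by
  have hFG : Module.Finite ℤ H := Module.Finite.iff_addGroup_fg.mpr ‹_›
  have : Module.Finite ℚ (ℚ ⊗[ℤ] H) := inferInstance
  set i : ↥N →ₗ[ℤ] H := (N.subtype).toIntLinearMap with hi_def
  have hiQ : Function.Injective (i.baseChange ℚ) := by
    rw [show ⇑(i.baseChange ℚ) = ⇑(i.lTensor ℚ) from LinearMap.baseChange_eq_ltensor i]
    exact Module.Flat.lTensor_preserves_injective_linearMap i Subtype.val_injective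
  exact LinearMap.finrank_le_finrank_of_injective hiQ

theorem rk_eq_zero_of_torsion {M : Type*} [AddCommGroup M]
    (h : AddMonoid.IsTorsion M) : rkOf M = 0 := by
  have hsub : Subsingleton (ℚ ⊗[ℤ] M) := by
    refine subsingleton_of_forall_eq 0 fun x => ?_
    induction x using TensorProduct.induction_on with
    | zero => rfl
    | tmul q m =>
      obtain ⟨n, hn, hnm⟩ := (isOfFinAddOrder_iff_nsmul_eq_zero).mp (h m)
      have hq : q = (n : ℤ) • ((n : ℚ)⁻¹ * q) := by
        have hn0 : (n : ℚ) ≠ 0 := Nat.cast_ne_zero.mpr hn.ne'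
        rw [zsmul_eq_mul]
        push_cast
        field_simp
      rw [hq, TensorProduct.smul_tmul, show (n : ℤ) • m = 0 by
        rw [natCast_zsmul]; exact hnm, TensorProduct.tmul_zero]
    | add a b ha hb => rw [ha, hb, add_zero]
  unfold rkOf
  exact Module.finrank_zero_of_subsingleton

theorem torsion_of_rk_eq_zero {M : Type*} [AddCommGroup M] [AddGroup.FG M]
    (h : rkOf M = 0) : AddMonoid.IsTorsion M := by
  have hFG : Module.Finite ℤ M := Module.Finite.iff_addGroup_fg.mpr ‹_›
  have : Module.Finite ℚ (ℚ ⊗[ℤ] M) := inferInstance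
  have hsub : Subsingleton (ℚ ⊗[ℤ] M) := Module.finrank_zero_iff.mp h
  intro x
  by_contra hx
  have hinj : Function.Injective (LinearMap.toSpanSingleton ℤ M x) := by
    intro a b hab
    simp only [LinearMap.toSpanSingleton_apply] at hab
    by_contra hne
    have h0 : (a - b) • x = 0 := by rw [sub_smul, hab, sub_self]
    exact hx (isOfFinAddOrder_iff_zsmul_eq_zero.mpr ⟨a - b, sub_ne_zero_of_ne hne, h0⟩)
  have hinjQ : Function.Injective ((LinearMap.toSpanSingleton ℤ M x).baseChange ℚ) := by
    rw [show ⇑((LinearMap.toSpanSingleton ℤ M x).baseChange ℚ)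
        = ⇑((LinearMap.toSpanSingleton ℤ M x).lTensor ℚ) from
      LinearMap.baseChange_eq_ltensor _]
    exact Module.Flat.lTensor_preserves_injective_linearMap _ hinj
  have hnt : Nontrivial (ℚ ⊗[ℤ] ℤ) := (TensorProduct.rid ℤ ℚ).toEquiv.nontrivial
  obtain ⟨u, v, huv⟩ := hnt
  exact huv (hinjQ (Subsingleton.elim _ _))

theorem exists_hom_to_int {M : Type*} [AddCommGroup M] [AddGroup.FG M]
    (h : ¬ AddMonoid.IsTorsion M) : ∃ (φ : M →+ ℤ) (q : M), φ q ≠ 0 := by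
  have hFG : Module.Finite ℤ M := Module.Finite.iff_addGroup_fg.mpr ‹_›
  obtain ⟨x, hx⟩ := not_forall.mp h
  set T := Submodule.torsion ℤ M
  have hxT : x ∉ T := by
    intro hxT
    obtain ⟨⟨n, hn⟩, hnx⟩ := hxT
    exact hx (isOfFinAddOrder_iff_zsmul_eq_zero.mpr
      ⟨n, nonZeroDivisors.ne_zero hn, hnx⟩)
  have hnt : Nontrivial (M ⧸ T) := by
    refine ⟨T.mkQ x, 0, ?_⟩
    rw [Ne, Submodule.mkQ_apply, Submodule.Quotient.mk_eq_zero]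
    exact hxT
  have hfree : Module.Free ℤ (M ⧸ T) := Module.free_of_finite_type_torsion_free'
  let b := Module.Free.chooseBasis ℤ (M ⧸ T)
  have : Nonempty (Module.Free.ChooseBasisIndex ℤ (M ⧸ T)) := b.index_nonempty
  obtain ⟨i⟩ := this
  refine ⟨((b.coord i).comp T.mkQ).toAddMonoidHom, ?_⟩
  obtain ⟨y, hy⟩ := T.mkQ_surjective (b i)
  refine ⟨y, ?_⟩
  simp [hy]

noncomputable section CircleEmbedding

def ratCastAddHom' : ℚ →+ ℝ := (Rat.castHom ℝ).toAddMonoidHom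

lemma ratCast_maps' : AddSubgroup.zmultiples (1 : ℚ) ≤
    (AddSubgroup.zmultiples (1 : ℝ)).comap ratCastAddHom' := by
  rintro x ⟨n, rfl⟩
  exact ⟨n, by simp [ratCastAddHom']⟩

def ratToRealCircle : AddCircle (1 : ℚ) →+ AddCircle (1 : ℝ) :=
  QuotientAddGroup.map _ _ ratCastAddHom' ratCast_maps'

lemma ratToRealCircle_ne_zero {a : AddCircle (1 : ℚ)} (ha : a ≠ 0) :
    ratToRealCircle a ≠ 0 := by
  induction a using QuotientAddGroup.induction_on with
  | H x =>
    intro h0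
    apply ha
    have : ratCastAddHom' x ∈ AddSubgroup.zmultiples (1 : ℝ) := by
      rwa [ratToRealCircle, QuotientAddGroup.map_mk,
        QuotientAddGroup.eq_zero_iff] at h0
    obtain ⟨n, hn⟩ := this
    rw [QuotientAddGroup.eq_zero_iff]
    refine ⟨n, ?_⟩
    show n • (1:ℚ) = x
    have hn' : ((n:ℚ):ℝ) = ((x:ℚ):ℝ) := by
      simpa [ratCastAddHom'] using hn
    have : (n:ℚ) = x := Rat.cast_injective hn'
    rw [zsmul_eq_mul, mul_one, this]

/-- Embedding of `AddCircle (1:ℚ)` into `Additive ℂˣ`. -/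
def circleEmb : AddCircle (1 : ℚ) →+ Additive ℂˣ :=
  (MonoidHom.toAdditive Circle.toUnits).comp
    ((AddMonoidHom.mk' (fun x => Additive.ofMul (AddCircle.toCircle x))
      (fun a b => congrArg Additive.ofMul (AddCircle.toCircle_add a b))).comp
      ratToRealCircle)

lemma circleEmb_ne_zero {a : AddCircle (1 : ℚ)} (ha : a ≠ 0) : circleEmb a ≠ 0 := by
  have h1 := ratToRealCircle_ne_zero ha
  intro h0
  apply h1
  have h2 : AddCircle.toCircle (ratToRealCircle a) = 1 := by
    have : Circle.toUnits (AddCircle.toCircle (ratToRealCircle a)) = 1 := h0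
    have hi : Function.Injective Circle.toUnits := fun x y hxy => by
      have := congrArg (fun u : ℂˣ => (u : ℂ)) hxy
      exact Subtype.ext (by simpa [Circle.toUnits_apply] using this)
    simpa using hi (by simpa using this)
  have := AddCircle.injective_toCircle (one_ne_zero (α := ℝ))
  rw [← AddCircle.toCircle_zero] at h2
  exact this h2

theorem exists_char_ne_one {M : Type*} [AddCommGroup M] {x : M} (hx : x ≠ 0) :
    ∃ χ : Multiplicative M →* ℂˣ, χ (Multiplicative.ofAdd x) ≠ 1 := by
  obtain ⟨c, hc⟩ := CharacterModule.exists_character_apply_ne_zero_of_ne_zero hx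
  refine ⟨AddMonoidHom.toMultiplicativeLeft
    (AddMonoidHom.mk' (fun m => circleEmb (c m)) (fun a b => by simp only [map_add])), ?_⟩
  intro h1
  exact circleEmb_ne_zero hc h1

end CircleEmbedding

theorem finite_addHom_units {Q : Type*} [AddCommGroup Q] [Finite Q] :
    Finite (Q →+ Additive ℂˣ) := by
  have : Nonempty Q := ⟨0⟩
  set n := Nat.card Q with hn
  haveI : NeZero n := ⟨Nat.card_pos.ne'⟩
  have hθ : ∀ (f : Q →+ Additive ℂˣ) (q : Q), (Additive.toMul (f q)) ^ n = 1 := by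
    intro f q
    have h1 : f (n • q) = n • f q := map_nsmul f n q
    rw [card_nsmul_eq_zero', map_zero] at h1
    calc (Additive.toMul (f q)) ^ n = Additive.toMul (n • f q) := rfl
    _ = 1 := by rw [← h1]; rfl
  set Θ : (Q →+ Additive ℂˣ) → (Q → rootsOfUnity n ℂ) :=
    fun f q => ⟨Additive.toMul (f q), by rw [mem_rootsOfUnity]; exact hθ f q⟩ with hΘ
  have hinj : Function.Injective Θ := by
    intro f g hfg
    ext q
    have := congrFun hfg q
    rw [show f q = g q by simpa [hΘ, Subtype.ext_iff] using this]
  exact Finite.of_injective Θ hinj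

theorem exists_max_cyclic {G : Type*} [AddCommGroup G] [Finite G] [Nontrivial G] :
    ∃ M : AddSubgroup G, M ≠ ⊤ ∧ IsAddCyclic (G ⧸ M) := by
  set s : Set (AddSubgroup G) := {M | M ≠ ⊤} with hs
  obtain ⟨M, hMs, hmax⟩ := Set.Finite.exists_maximalFor id s (Set.toFinite s)
    ⟨⊥, bot_ne_top⟩
  refine ⟨M, hMs, ?_⟩
  have hx : ∃ x : G, x ∉ M := by
    by_contra hc
    push_neg at hc
    exact hMs (AddSubgroup.eq_top_iff' M |>.mpr hc)
  obtain ⟨x, hx⟩ := hx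
  set g := QuotientAddGroup.mk' M x with hg
  have hM' : (AddSubgroup.zmultiples g).comap (QuotientAddGroup.mk' M) = ⊤ := by
    by_contra hne
    have hMle : M ≤ (AddSubgroup.zmultiples g).comap (QuotientAddGroup.mk' M) := by
      intro m hm
      simp only [AddSubgroup.mem_comap]
      rw [show QuotientAddGroup.mk' M m = 0 from (QuotientAddGroup.eq_zero_iff m).mpr hm]
      exact zero_mem _
    have := le_antisymm hMle (hmax (j := (AddSubgroup.zmultiples g).comap (QuotientAddGroup.mk' M)) (by exact hne) hMle)
    apply hx
    rw [show M = _ from this]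
    exact AddSubgroup.mem_comap.mpr (AddSubgroup.mem_zmultiples g)
  constructor
  refine ⟨g, fun y => ?_⟩
  induction y using QuotientAddGroup.induction_on with
  | H z =>
    have : z ∈ (AddSubgroup.zmultiples g).comap (QuotientAddGroup.mk' M) := by
      rw [hM']; trivial
    exact AddSubgroup.mem_comap.mp this

lemma le_pclose {H : Type*} [AddCommGroup H] (ξ : AddSubgroup H) : ξ ≤ pclose ξ :=
  fun x hx => ⟨1, Nat.one_pos, by simpa using hx⟩

lemma addGroupFG_subgroup {H : Type*} [AddCommGroup H] [AddGroup.FG H]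
    (P : AddSubgroup H) : AddGroup.FG ↥P := by
  have : Module.Finite ℤ H := Module.Finite.iff_addGroup_fg.mpr ‹_›
  have : IsNoetherian ℤ H := inferInstance
  have h2 : Module.Finite ℤ ↥(AddSubgroup.toIntSubmodule P) := inferInstance
  exact Module.Finite.iff_addGroup_fg.mp h2

theorem lemmaA_forward {H A : Type*} [AddCommGroup H] [AddGroup.FG H] [AddCommGroup A]
    (ν : H →+ A) (ξ : AddSubgroup H) {z : H}
    (hzP : z ∈ pclose ξ) (hzN : z ∉ ν.ker ⊔ ξ) :
    ∃ ξ' : AddSubgroup H, ξ ≤ ξ' ∧ ξ' < pclose ξ ∧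
      IsAddCyclic (↥(pclose ξ) ⧸ ξ'.addSubgroupOf (pclose ξ)) ∧
      ∀ x ∈ pclose ξ, x ∉ ξ' → ν x ≠ 0 := by
  classical
  set P := pclose ξ with hP
  set β : AddSubgroup H := (ν.ker ⊔ ξ) ⊓ P with hβ
  have hξβ : ξ ≤ β := le_inf le_sup_right (le_pclose ξ)
  set βP := β.addSubgroupOf P with hβP
  haveI : AddGroup.FG ↥P := addGroupFG_subgroup P
  haveI hGfg : AddGroup.FG (↥P ⧸ βP) :=
    AddGroup.fg_of_surjective (QuotientAddGroup.mk'_surjective βP)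
  have htors : AddMonoid.IsTorsion (↥P ⧸ βP) := by
    intro g
    induction g using QuotientAddGroup.induction_on with
    | H p =>
      obtain ⟨m, hm, hmem⟩ := p.2
      refine isOfFinAddOrder_iff_nsmul_eq_zero.mpr ⟨m, hm, ?_⟩
      show m • ((QuotientAddGroup.mk' βP) p) = 0
      rw [← map_nsmul, QuotientAddGroup.mk'_apply, QuotientAddGroup.eq_zero_iff]
      show ((m • p : ↥P) : H) ∈ β
      refine ⟨AddSubgroup.mem_sup.mpr ⟨0, (ν.ker).zero_mem, m • (p:H), hmem, by simp⟩, ?_⟩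
      exact (m • p : ↥P).2
  haveI : Finite (↥P ⧸ βP) := AddCommGroup.finite_of_fg_torsion _ htors
  haveI : Nontrivial (↥P ⧸ βP) := by
    refine ⟨QuotientAddGroup.mk' βP ⟨z, hzP⟩, 0, ?_⟩
    rw [Ne, QuotientAddGroup.mk'_apply, QuotientAddGroup.eq_zero_iff]
    intro hc
    exact hzN hc.1
  obtain ⟨M, hM, hMcyc⟩ := exists_max_cyclic (G := ↥P ⧸ βP)
  set φ : ↥P →+ (↥P ⧸ βP) ⧸ M := (QuotientAddGroup.mk' M).comp (QuotientAddGroup.mk' βP)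
    with hφ
  have hφs : Function.Surjective φ :=
    (QuotientAddGroup.mk'_surjective M).comp (QuotientAddGroup.mk'_surjective βP)
  set ξ' : AddSubgroup H := φ.ker.map P.subtype with hξ'
  have hmem_iff : ∀ (x : H) (hx : x ∈ P), (x ∈ ξ' ↔ φ ⟨x, hx⟩ = 0) := by
    intro x hx
    constructor
    · rintro ⟨y, hy, hyx⟩
      have : y = ⟨x, hx⟩ := Subtype.ext hyx
      rwa [← this]
    · intro h0
      exact ⟨⟨x, hx⟩, h0, rfl⟩
  have hβξ' : β ≤ ξ' := by
    intro x hxβ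
    have hxP : x ∈ P := hxβ.2
    rw [hmem_iff x hxP]
    have : (QuotientAddGroup.mk' βP) ⟨x, hxP⟩ = 0 := by
      rw [QuotientAddGroup.mk'_apply, QuotientAddGroup.eq_zero_iff]
      exact hxβ
    rw [hφ, AddMonoidHom.comp_apply, this, map_zero]
  have hξ'P : ξ' ≤ P := by
    rintro x ⟨y, _, rfl⟩
    exact y.2
  refine ⟨ξ', le_trans hξβ hβξ', ?_, ?_, ?_⟩
  · refine lt_of_le_of_ne hξ'P ?_
    have : ∃ c : ↥P ⧸ βP, c ∉ M := by
      by_contra hc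
      push_neg at hc
      exact hM (AddSubgroup.eq_top_iff' M |>.mpr hc)
    obtain ⟨c, hc⟩ := this
    obtain ⟨p, rfl⟩ := QuotientAddGroup.mk'_surjective βP c
    intro heq
    apply hc
    have hpξ' : (p : H) ∈ ξ' := by rw [heq]; exact p.2
    rw [hmem_iff _ p.2] at hpξ'
    have hφp : φ p = 0 := by rwa [Subtype.coe_eta] at hpξ'
    have h2 : (QuotientAddGroup.mk' M) ((QuotientAddGroup.mk' βP) p) = 0 := hφp
    rwa [QuotientAddGroup.mk'_apply, QuotientAddGroup.eq_zero_iff] at h2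
  · have hker : ξ'.addSubgroupOf P = φ.ker := by
      ext y
      rw [AddSubgroup.mem_addSubgroupOf, hmem_iff (y : H) y.2]
      constructor
      · intro h; exact h
      · intro h; exact h
    have e0 := QuotientAddGroup.quotientAddEquivOfEq hker
    have e := QuotientAddGroup.quotientKerEquivOfSurjective φ hφs
    haveI := hMcyc
    haveI h1 : IsAddCyclic (↥P ⧸ φ.ker) := isAddCyclic_of_surjective e.symm e.symm.surjective
    exact isAddCyclic_of_surjective e0.symm e0.symm.surjective
  · intro x hxP hxξ' hνx
    apply hxξ'
    apply hβξ'
    exact ⟨AddSubgroup.mem_sup.mpr ⟨x, hνx, 0, ξ.zero_mem, by rw [add_zero]⟩, hxP⟩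

lemma units_base_inj {n m t : ℕ} (ht : t ≠ 0)
    (h : (((n+2:ℕ):ℂ))^t = (((m+2:ℕ):ℂ))^t) : n = m := by
  have h3 : (n+2)^t = (m+2)^t := by exact_mod_cast h
  have h4 := Nat.pow_left_injective ht h3
  omega

theorem exists_inj_family {H : Type*} [AddCommGroup H] [AddGroup.FG H] {N : AddSubgroup H}
    (hrk : rkOf ↥N < rkOf H) {z : H} (hzN : z ∉ N)
    (hzt : ∃ m : ℕ, 0 < m ∧ m • z ∈ N) :
    ∃ ρ : ℕ → CharGp H, Function.Injective ρ ∧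
      ∀ n, (∀ x ∈ N, ρ n (Multiplicative.ofAdd x) = 1) ∧
        ρ n (Multiplicative.ofAdd z) ≠ 1 := by
  classical
  set mk := QuotientAddGroup.mk' N with hmk
  haveI : AddGroup.FG (H ⧸ N) := AddGroup.fg_of_surjective (QuotientAddGroup.mk'_surjective N)
  have hadd := rk_ker_add_rk mk (QuotientAddGroup.mk'_surjective N)
  rw [QuotientAddGroup.ker_mk'] at hadd
  have hrkQ : rkOf (H ⧸ N) ≠ 0 := by omega
  have hQnt : ¬ AddMonoid.IsTorsion (H ⧸ N) := fun ht => hrkQ (rk_eq_zero_of_torsion ht)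
  obtain ⟨φ, q₀, hq₀⟩ := exists_hom_to_int hQnt
  have hz' : mk z ≠ 0 := by
    rw [hmk, Ne, QuotientAddGroup.mk'_apply, QuotientAddGroup.eq_zero_iff]
    exact hzN
  obtain ⟨χ, hχ⟩ := exists_char_ne_one hz'
  have hφz : φ (mk z) = 0 := by
    obtain ⟨m, hm, hmz⟩ := hzt
    have h0 : m • mk z = 0 := by
      rw [← map_nsmul, hmk, QuotientAddGroup.mk'_apply, QuotientAddGroup.eq_zero_iff]
      exact hmz
    have h1 : m • φ (mk z) = 0 := by rw [← map_nsmul, h0, map_zero]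
    have h2 : (m : ℤ) * φ (mk z) = 0 := by rwa [nsmul_eq_mul] at h1
    rcases mul_eq_zero.mp h2 with h | h
    · exact absurd h (by exact_mod_cast hm.ne')
    · exact h
  set u : ℕ → ℂˣ := fun n => Units.mk0 (((n+2:ℕ):ℂ)) (Nat.cast_ne_zero.mpr (by omega))
    with hu
  set ρ : ℕ → CharGp H := fun n =>
    (χ.comp (AddMonoidHom.toMultiplicative mk)) *
      ((zpowersHom ℂˣ (u n)).comp (AddMonoidHom.toMultiplicative (φ.comp mk))) with hρ
  have heval : ∀ (n : ℕ) (x : H),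
      ρ n (Multiplicative.ofAdd x) = χ (Multiplicative.ofAdd (mk x)) * (u n) ^ (φ (mk x)) :=
    fun n x => rfl
  refine ⟨ρ, ?_, ?_⟩
  · intro n m hnm
    obtain ⟨x₀, hx₀⟩ := QuotientAddGroup.mk'_surjective N q₀
    have h1 := congrArg (fun f : CharGp H => f (Multiplicative.ofAdd x₀)) hnm
    simp only [heval, hx₀] at h1
    have h2 : (u n) ^ (φ q₀) = (u m) ^ (φ q₀) := by rw [← hx₀]; exact mul_left_cancel h1
    have h3 : (((n+2:ℕ):ℂ))^(φ q₀) = (((m+2:ℕ):ℂ))^(φ q₀) := by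
      have := congrArg (fun w : ℂˣ => (w : ℂ)) h2
      simpa [hu, Units.val_zpow_eq_zpow_val] using this
    rcases lt_or_gt_of_ne hq₀ with hk | hk
    · have h4 : (((n+2:ℕ):ℂ))^(-φ q₀) = (((m+2:ℕ):ℂ))^(-φ q₀) := by
        rw [zpow_neg, zpow_neg, h3]
      rw [show -φ q₀ = ((-φ q₀).toNat : ℤ) from (Int.toNat_of_nonneg (by omega)).symm,
        zpow_natCast, zpow_natCast] at h4
      exact units_base_inj (by omega) h4
    · rw [show φ q₀ = ((φ q₀).toNat : ℤ) from (Int.toNat_of_nonneg (by omega)).symm,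
        zpow_natCast, zpow_natCast] at h3
      exact units_base_inj (by omega) h3
  · intro n
    constructor
    · intro x hx
      have hx0 : mk x = 0 := by
        rw [hmk, QuotientAddGroup.mk'_apply, QuotientAddGroup.eq_zero_iff]; exact hx
      have hφ0 : φ (0 : H ⧸ N) = 0 := map_zero φ
      rw [heval, hx0, hφ0, zpow_zero, mul_one,
        show Multiplicative.ofAdd (0 : H ⧸ N) = 1 from rfl, map_one]
    · rw [heval, hφz, zpow_zero, mul_one]
      exact hχ

theorem S_finite_of_finite_quot {H : Type*} [AddCommGroup H] (N : AddSubgroup H)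
    [Finite (H ⧸ N)] (S : Set (CharGp H))
    (hS : ∀ ρ ∈ S, ∀ x ∈ N, ρ (Multiplicative.ofAdd x) = 1) : S.Finite := by
  classical
  haveI := finite_addHom_units (Q := H ⧸ N)
  set addify : CharGp H → (H →+ Additive ℂˣ) := fun ρ =>
    AddMonoidHom.mk' (fun x => Additive.ofMul (ρ (Multiplicative.ofAdd x)))
      (fun a b => by simp [ofAdd_add, map_mul]) with haddify
  set j : ↥S → ((H ⧸ N) →+ Additive ℂˣ) := fun ρ =>
    QuotientAddGroup.lift N (addify ρ.1)
      (fun x hx => by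
        rw [AddMonoidHom.mem_ker, AddMonoidHom.mk'_apply, hS ρ.1 ρ.2 x hx]
        rfl) with hj
  have hinj : Function.Injective j := by
    intro ρ₁ ρ₂ h
    have hval : ∀ x : H, ρ₁.1 (Multiplicative.ofAdd x) = ρ₂.1 (Multiplicative.ofAdd x) := by
      intro x
      have := congrArg (fun f : (H ⧸ N) →+ Additive ℂˣ => f (QuotientAddGroup.mk x)) h
      simpa [hj, haddify] using this
    apply Subtype.ext
    refine MonoidHom.ext fun y => ?_
    exact hval y.toAdd
  rw [← Set.finite_coe_iff]
  exact Finite.of_injective j hinj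

/-- `Υ_A(V(ξ) ∖ V(ξ̄)) = σ_A(ξ) ∩ θ_A(ξ)` for a non-primitive subgroup `ξ ≤ H`:
`im(ν̂) ∩ (V(ξ) ∖ V(ξ̄))` is infinite iff `rank(ker ν + ξ) < rank H` and there is a
subgroup `ξ ≤ ξ' ⊊ ξ̄` with `ξ̄/ξ'` cyclic and `ν` nonvanishing on `ξ̄ ∖ ξ'`. -/
theorem statement14 {H A : Type*} [AddCommGroup H] [AddGroup.FG H]
    [AddCommGroup A] [AddGroup.FG A]
    (ν : H →+ A) (hν : Function.Surjective ν)
    (ξ : AddSubgroup H) (hnp : ξ ≠ pclose ξ) :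
    {ρ : CharGp H | (∀ x ∈ ν.ker, ρ (Multiplicative.ofAdd x) = 1) ∧
        (∀ y ∈ ξ, ρ (Multiplicative.ofAdd y) = 1) ∧
        ∃ z ∈ pclose ξ, ρ (Multiplicative.ofAdd z) ≠ 1}.Infinite ↔
      rkOf ↥(ν.ker ⊔ ξ) < rkOf H ∧
        ∃ ξ' : AddSubgroup H, ξ ≤ ξ' ∧ ξ' < pclose ξ ∧
          IsAddCyclic (↥(pclose ξ) ⧸ ξ'.addSubgroupOf (pclose ξ)) ∧
          ∀ x ∈ pclose ξ, x ∉ ξ' → ν x ≠ 0 := by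
  classical
  constructor
  · intro hinf
    obtain ⟨ρ₀, hρ₀⟩ := hinf.nonempty
    obtain ⟨hρK, hρξ, z, hzP, hzρ⟩ := hρ₀
    have hρN : ∀ x ∈ ν.ker ⊔ ξ, ρ₀ (Multiplicative.ofAdd x) = 1 := by
      intro x hx
      obtain ⟨k, hk, y, hy, rfl⟩ := AddSubgroup.mem_sup.mp hx
      rw [ofAdd_add, map_mul, hρK k hk, hρξ y hy, one_mul]
    have hzN : z ∉ ν.ker ⊔ ξ := fun h => hzρ (hρN z h)
    refine ⟨?_, lemmaA_forward ν ξ hzP hzN⟩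
    by_contra hrk
    haveI : AddGroup.FG (H ⧸ (ν.ker ⊔ ξ)) :=
      AddGroup.fg_of_surjective (QuotientAddGroup.mk'_surjective _)
    have hadd := rk_ker_add_rk (QuotientAddGroup.mk' (ν.ker ⊔ ξ))
      (QuotientAddGroup.mk'_surjective _)
    rw [QuotientAddGroup.ker_mk'] at hadd
    have hle := rk_le_subgroup (ν.ker ⊔ ξ)
    have hq0 : rkOf (H ⧸ (ν.ker ⊔ ξ)) = 0 := by omega
    haveI : Finite (H ⧸ (ν.ker ⊔ ξ)) :=
      AddCommGroup.finite_of_fg_torsion _ (torsion_of_rk_eq_zero hq0)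
    refine hinf (S_finite_of_finite_quot (ν.ker ⊔ ξ) _ ?_)
    rintro ρ ⟨h1, h2, -⟩ x hx
    obtain ⟨k, hk, y, hy, rfl⟩ := AddSubgroup.mem_sup.mp hx
    rw [ofAdd_add, map_mul, h1 k hk, h2 y hy, one_mul]
  · rintro ⟨hrk, ξ', hξξ', hlt, hcyc, hnv⟩
    obtain ⟨hle', z, hzP, hzξ'⟩ := SetLike.lt_iff_le_and_exists.mp hlt
    have hzN : z ∉ ν.ker ⊔ ξ := by
      intro hzN
      obtain ⟨k, hk, y, hy, hky⟩ := AddSubgroup.mem_sup.mp hzN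
      have hkP : k ∈ pclose ξ := by
        have hk' : k = z + (-y) := by rw [← hky]; abel
        rw [hk']
        exact (pclose ξ).add_mem hzP ((pclose ξ).neg_mem (le_pclose ξ hy))
      have hkξ' : k ∉ ξ' := by
        intro h
        exact hzξ' (by rw [← hky]; exact ξ'.add_mem h (hξξ' hy))
      exact hnv k hkP hkξ' (AddMonoidHom.mem_ker.mp hk)
    have hzt : ∃ m : ℕ, 0 < m ∧ m • z ∈ ν.ker ⊔ ξ := by
      obtain ⟨m, hm, hmz⟩ := hzP
      exact ⟨m, hm, AddSubgroup.mem_sup.mpr ⟨0, (ν.ker).zero_mem, _, hmz, zero_add _⟩⟩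
    obtain ⟨ρ, hinj, hρ⟩ := exists_inj_family hrk hzN hzt
    apply Set.infinite_of_injective_forall_mem hinj
    intro n
    obtain ⟨h1, h2⟩ := hρ n
    exact ⟨fun x hx => h1 x (AddSubgroup.mem_sup_left hx),
      fun y hy => h1 y (AddSubgroup.mem_sup_right hy), z, hzP, h2⟩
end
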